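/- Suppose the equilibrium x = 0 is p-th moment exponentially stable: there exist K < ∞ and β ∈ (0,1) such that ∫_{W^n} ‖T^n(x,w)‖^p dv^n(w) ≤ K β^n ‖x‖^p for all x ∈ X and n ≥ 1. Let f(x) = ‖x‖^p. Then the series V(x) := Σ_{k=0}^∞ [U_T^k f](x) converges for every x ∈ X, V satisfies the resolvent identity V(x) = f(x) + [U_T V](x) (i.e., V = (I − U_T)^{-1} f), and with b := 1 + Kβ/(1−β) and c := 1 − 1/b ∈ (0,1) one has ‖x‖^p ≤ V(x) ≤ b ‖x‖^p and [U_T V](x) ≤ c V(x) for all x ∈ X. -/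

import Mathlib

open MeasureTheory Filter Metric Set

noncomputable section

/-- The `n`-step composed map `T^n : X × W^n → X` (so that
`[U_T^k f](x) = ∫_{W^k} f(T^k(x,w)) dv^k(w)`, with `T^0(x) = x`). -/
def Tn {α Wsp : Type*} (T : α → Wsp → α) : (n : ℕ) → α → (Fin n → Wsp) → α
  | 0, x, _ => x
  | n + 1, x, w => T (Tn T n x fun i => w i.castSucc) (w (Fin.last n))

lemma Tn_succ_left {α Wsp : Type*} (T : α → Wsp → α) (n : ℕ) (x : α) (w : Fin (n+1) → Wsp) :
    Tn T (n+1) x w = Tn T n (T x (w 0)) (fun i => w i.succ) := by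
  induction n with
  | zero => rfl
  | succ n ih =>
    show T (Tn T (n+1) x fun i => w i.castSucc) (w (Fin.last (n+1)))
        = T (Tn T n (T x (w 0)) fun i => w i.succ.castSucc) (w (Fin.last n).succ)
    rw [ih]
    simp [Fin.succ_castSucc, Fin.succ_last, -Fin.castSucc_succ]

lemma measurable_Tn {α Wsp : Type*} [MeasurableSpace α] [MeasurableSpace Wsp]
    {T : α → Wsp → α} (hT : Measurable (Function.uncurry T)) (n : ℕ) :
    Measurable (fun q : α × (Fin n → Wsp) => Tn T n q.1 q.2) := by
  induction n with
  | zero => exact measurable_fst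
  | succ n ih =>
    exact hT.comp ((ih.comp (measurable_fst.prodMk (measurable_pi_lambda _ fun i =>
      (measurable_pi_apply _).comp measurable_snd))).prodMk
      ((measurable_pi_apply _).comp measurable_snd))

/-- if `x = 0` is `p`-th moment exponentially stable,
`∫_{Wⁿ} ‖Tⁿ(x,w)‖^p dvⁿ ≤ K βⁿ ‖x‖^p`, then with `f(x) = ‖x‖^p` the series
`V(x) = Σ_{k=0}^∞ [U_T^k f](x)` converges, satisfies the resolvent identity
`V(x) = f(x) + [U_T V](x)` (i.e. `V = (I − U_T)⁻¹ f`), and with `b = 1 + Kβ/(1−β)`,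
`c = 1 − 1/b ∈ (0,1)` one has `‖x‖^p ≤ V(x) ≤ b‖x‖^p` and `[U_T V](x) ≤ c V(x)` on `X`. -/
theorem lyapunov_function_from_koopman_resolvent
    {d : ℕ} {Wsp : Type*} [MeasurableSpace Wsp]
    (X : Set (EuclideanSpace ℝ (Fin d))) (hX : IsCompact X)
    (v : Measure Wsp) [IsProbabilityMeasure v]
    (T : EuclideanSpace ℝ (Fin d) → Wsp → EuclideanSpace ℝ (Fin d))
    (hT : Measurable (Function.uncurry T))
    (hTX : ∀ x ∈ X, ∀ y, T x y ∈ X)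
    (p : ℕ) (hp : 0 < p)
    (K : ℝ) (hK : 0 < K) (β : ℝ) (hβ0 : 0 < β) (hβ1 : β < 1)
    (hstab : ∀ x ∈ X, ∀ n : ℕ, 1 ≤ n →
      (∫ w, ‖Tn T n x w‖ ^ p ∂(Measure.pi fun _ : Fin n => v)) ≤ K * β ^ n * ‖x‖ ^ p)
    (V : EuclideanSpace ℝ (Fin d) → ℝ)
    (hVdef : V = fun x =>
      ∑' k : ℕ, ∫ w, ‖Tn T k x w‖ ^ p ∂(Measure.pi fun _ : Fin k => v)) :
    (0 < 1 - 1 / (1 + K * β / (1 - β)) ∧ 1 - 1 / (1 + K * β / (1 - β)) < 1) ∧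
    ∀ x ∈ X,
      Summable (fun k : ℕ => ∫ w, ‖Tn T k x w‖ ^ p ∂(Measure.pi fun _ : Fin k => v)) ∧
      V x = ‖x‖ ^ p + ∫ y, V (T x y) ∂v ∧
      ‖x‖ ^ p ≤ V x ∧ V x ≤ (1 + K * β / (1 - β)) * ‖x‖ ^ p ∧
      (∫ y, V (T x y) ∂v) ≤ (1 - 1 / (1 + K * β / (1 - β))) * V x := by
  have hβ' : (0:ℝ) < 1 - β := by linarith
  set b : ℝ := 1 + K * β / (1 - β) with hb
  have hb1 : 1 < b := by
    have : 0 < K * β / (1 - β) := by positivity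
    simp only [hb]; linarith
  have hb0 : (0:ℝ) < b := by linarith
  have hcpos : 0 < 1 - 1 / b := by
    have : 1 / b < 1 := by rw [div_lt_one hb0]; exact hb1
    linarith
  have hclt : 1 - 1 / b < 1 := by
    have : 0 < 1 / b := by positivity
    linarith
  refine ⟨⟨hcpos, hclt⟩, ?_⟩
  -- measurability of Tn slices
  have measTnx : ∀ (k : ℕ) (x : EuclideanSpace ℝ (Fin d)),
      Measurable (fun w : Fin k → Wsp => Tn T k x w) := fun k x =>
    (measurable_Tn hT k).comp (measurable_const.prodMk measurable_id)
  -- the ENNReal version of the iterated Koopman values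
  set L : ℕ → EuclideanSpace ℝ (Fin d) → ENNReal := fun k x =>
    ∫⁻ w, ENNReal.ofReal (‖Tn T k x w‖ ^ p) ∂(Measure.pi fun _ : Fin k => v) with hLdef
  have measL : ∀ k, Measurable (L k) := by
    intro k
    exact Measurable.lintegral_prod_right
      (f := fun x w => ENNReal.ofReal (‖Tn T k x w‖ ^ p))
      (((measurable_Tn hT k).norm.pow_const p).ennreal_ofReal)
  have haL : ∀ (k : ℕ) (x : EuclideanSpace ℝ (Fin d)),
      (∫ w, ‖Tn T k x w‖ ^ p ∂(Measure.pi fun _ : Fin k => v)) = (L k x).toReal := by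
    intro k x
    rw [integral_eq_lintegral_of_nonneg_ae (Eventually.of_forall fun w => by positivity)
      (((measTnx k x).norm.pow_const p).aestronglyMeasurable)]
  -- recursion
  have hLrec : ∀ (k : ℕ) (x : EuclideanSpace ℝ (Fin d)),
      L (k+1) x = ∫⁻ y, L k (T x y) ∂v := by
    intro k x
    have hmp := measurePreserving_piFinSuccAbove (fun _ : Fin (k+1) => v) 0
    have hg : Measurable (fun q : Wsp × (Fin k → Wsp) =>
        ENNReal.ofReal (‖Tn T k (T x q.1) q.2‖ ^ p)) := by
      have hq : Measurable (fun q : Wsp × (Fin k → Wsp) => (T x q.1, q.2)) :=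
        (hT.comp (measurable_const.prodMk measurable_fst)).prodMk measurable_snd
      exact (((measurable_Tn hT k).comp hq).norm.pow_const p).ennreal_ofReal
    calc L (k+1) x
        = ∫⁻ w, (fun q : Wsp × (Fin k → Wsp) => ENNReal.ofReal (‖Tn T k (T x q.1) q.2‖ ^ p))
            ((MeasurableEquiv.piFinSuccAbove (fun _ : Fin (k+1) => Wsp) 0) w)
            ∂(Measure.pi fun _ : Fin (k+1) => v) := by
          refine lintegral_congr fun w => ?_
          have h0 : (MeasurableEquiv.piFinSuccAbove (fun _ : Fin (k+1) => Wsp) 0) w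
              = (w 0, fun i => w ((0 : Fin (k+1)).succAbove i)) := rfl
          rw [h0]
          simp only [Fin.zero_succAbove]
          rw [Tn_succ_left]
      _ = ∫⁻ q, ENNReal.ofReal (‖Tn T k (T x q.1) q.2‖ ^ p)
            ∂(v.prod (Measure.pi fun _ : Fin k => v)) := hmp.lintegral_comp hg
      _ = ∫⁻ y, ∫⁻ w', ENNReal.ofReal (‖Tn T k (T x y) w'‖ ^ p)
            ∂(Measure.pi fun _ : Fin k => v) ∂v := lintegral_prod _ hg.aemeasurable
      _ = ∫⁻ y, L k (T x y) ∂v := rfl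
  -- X is stable under Tn
  have hmem : ∀ x ∈ X, ∀ (k : ℕ) (w : Fin k → Wsp), Tn T k x w ∈ X := by
    intro x hx k
    induction k with
    | zero => intro w; exact hx
    | succ k ih => intro w; exact hTX _ (ih _) _
  obtain ⟨C, hC0, hC⟩ := hX.isBounded.exists_pos_norm_le
  -- uniform bound for L on X
  have hLbd : ∀ z ∈ X, ∀ k, L k z ≤ ENNReal.ofReal (C ^ p) := by
    intro z hz k
    calc L k z ≤ ∫⁻ _, ENNReal.ofReal (C ^ p) ∂(Measure.pi fun _ : Fin k => v) :=
          lintegral_mono fun w => ENNReal.ofReal_le_ofReal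
            (pow_le_pow_left₀ (norm_nonneg _) (hC _ (hmem z hz k w)) p)
      _ = ENNReal.ofReal (C ^ p) := by simp
  have hLne : ∀ z ∈ X, ∀ k, L k z ≠ ⊤ := fun z hz k =>
    ((hLbd z hz k).trans_lt ENNReal.ofReal_lt_top).ne
  -- now fix x
  intro x hx
  have hTxmem : ∀ y, T x y ∈ X := hTX x hx
  -- stability bounds, in toReal form
  have hstab' : ∀ k : ℕ, (L (k+1) x).toReal ≤ (K * ‖x‖ ^ p * β) * β ^ k := by
    intro k
    have := hstab x hx (k+1) (Nat.le_add_left 1 k)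
    rw [haL] at this
    calc (L (k+1) x).toReal ≤ K * β ^ (k+1) * ‖x‖ ^ p := this
      _ = (K * ‖x‖ ^ p * β) * β ^ k := by ring
  have hLstab : ∀ k : ℕ, L (k+1) x ≤ ENNReal.ofReal ((K * ‖x‖ ^ p * β) * β ^ k) := by
    intro k
    rw [← ENNReal.ofReal_toReal (hLne x hx (k+1))]
    exact ENNReal.ofReal_le_ofReal (hstab' k)
  have hnn : ∀ (k : ℕ) (z : EuclideanSpace ℝ (Fin d)), (0:ℝ) ≤ (L k z).toReal :=
    fun k z => ENNReal.toReal_nonneg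
  -- summability
  have hgeo : Summable (fun k : ℕ => (K * ‖x‖ ^ p * β) * β ^ k) :=
    (summable_geometric_of_lt_one hβ0.le hβ1).mul_left _
  have hsum1 : Summable (fun k : ℕ => (L (k+1) x).toReal) :=
    Summable.of_nonneg_of_le (fun k => hnn _ _) hstab' hgeo
  have hsum : Summable (fun k : ℕ => (L k x).toReal) := by
    have := (summable_nat_add_iff (f := fun k : ℕ => (L k x).toReal) 1).mpr
    exact (summable_nat_add_iff 1).mp (by simpa using hsum1)
  -- value at 0
  have hL0 : ∀ z : EuclideanSpace ℝ (Fin d), (L 0 z).toReal = ‖z‖ ^ p := by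
    intro z
    rw [← haL]
    show (∫ _, ‖z‖ ^ p ∂(Measure.pi fun _ : Fin 0 => v)) = ‖z‖ ^ p
    simp
  -- rewrite everything via haL
  rw [hVdef]
  simp only [haL]
  refine ⟨hsum, ?_⟩
  -- the sum bound
  have htsum_tail : ∑' k : ℕ, (L (k+1) x).toReal ≤ (K * ‖x‖ ^ p * β) * (1 - β)⁻¹ := by
    calc ∑' k : ℕ, (L (k+1) x).toReal ≤ ∑' k : ℕ, (K * ‖x‖ ^ p * β) * β ^ k :=
          Summable.tsum_le_tsum hstab' hsum1 hgeo
      _ = (K * ‖x‖ ^ p * β) * (1 - β)⁻¹ := by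
          rw [tsum_mul_left, tsum_geometric_of_lt_one hβ0.le hβ1]
  have hsplit : ∑' k : ℕ, (L k x).toReal
      = ‖x‖ ^ p + ∑' k : ℕ, (L (k+1) x).toReal := by
    rw [Summable.tsum_eq_zero_add hsum, hL0]
  have hub : ∑' k : ℕ, (L k x).toReal ≤ b * ‖x‖ ^ p := by
    rw [hsplit]
    have hxp : (0:ℝ) ≤ ‖x‖ ^ p := by positivity
    have : b * ‖x‖ ^ p = ‖x‖ ^ p + (K * ‖x‖ ^ p * β) * (1 - β)⁻¹ := by
      rw [hb]; field_simp
    rw [this]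
    linarith [htsum_tail]
  have hlb : ‖x‖ ^ p ≤ ∑' k : ℕ, (L k x).toReal := by
    rw [← hL0 x]
    exact Summable.le_tsum hsum 0 fun j _ => hnn _ _
  -- resolvent identity
  have hmeasy : ∀ k : ℕ, Measurable (fun y => L k (T x y)) := fun k =>
    (measL k).comp (hT.comp (measurable_const.prodMk measurable_id))
  have hstep : ∀ k : ℕ, (∫ y, (L k (T x y)).toReal ∂v) = (L (k+1) x).toReal := by
    intro k
    rw [integral_toReal (hmeasy k).aemeasurable
      (Eventually.of_forall fun y => (hLbd _ (hTxmem y) k).trans_lt ENNReal.ofReal_lt_top)]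
    rw [hLrec]
  have hswap : (∫ y, ∑' k : ℕ, (L k (T x y)).toReal ∂v)
      = ∑' k : ℕ, ∫ y, (L k (T x y)).toReal ∂v := by
    refine integral_tsum (fun k => ((hmeasy k).ennreal_toReal).aestronglyMeasurable) ?_
    have hfin : ∀ k : ℕ, (∫⁻ y, ‖(L k (T x y)).toReal‖ₑ ∂v) = L (k+1) x := by
      intro k
      have : ∀ y, ‖(L k (T x y)).toReal‖ₑ = L k (T x y) := by
        intro y
        rw [Real.enorm_eq_ofReal ENNReal.toReal_nonneg,
          ENNReal.ofReal_toReal (hLne _ (hTxmem y) k)]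
      rw [lintegral_congr this, ← hLrec]
    simp only [hfin]
    have : ∑' k : ℕ, L (k+1) x ≤ ENNReal.ofReal ((K * ‖x‖ ^ p * β) * (1 - β)⁻¹) := by
      calc ∑' k : ℕ, L (k+1) x
          ≤ ∑' k : ℕ, ENNReal.ofReal ((K * ‖x‖ ^ p * β) * β ^ k) :=
            ENNReal.tsum_le_tsum hLstab
        _ = ENNReal.ofReal (∑' k : ℕ, (K * ‖x‖ ^ p * β) * β ^ k) :=
            (ENNReal.ofReal_tsum_of_nonneg (fun k => by positivity) hgeo).symm
        _ = ENNReal.ofReal ((K * ‖x‖ ^ p * β) * (1 - β)⁻¹) := by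
            rw [tsum_mul_left, tsum_geometric_of_lt_one hβ0.le hβ1]
    exact (this.trans_lt ENNReal.ofReal_lt_top).ne
  have hres : ∑' k : ℕ, (L k x).toReal
      = ‖x‖ ^ p + ∫ y, ∑' k : ℕ, (L k (T x y)).toReal ∂v := by
    rw [hswap, hsplit]
    congr 1
    exact (tsum_congr fun k => (hstep k)).symm
  refine ⟨hres, hlb, hub, ?_⟩
  -- final Lyapunov drift inequality
  have hint : (∫ y, ∑' k : ℕ, (L k (T x y)).toReal ∂v)
      = (∑' k : ℕ, (L k x).toReal) - ‖x‖ ^ p := by linarith [hres]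
  rw [hint]
  have h5 : (∑' k : ℕ, (L k x).toReal) / b ≤ ‖x‖ ^ p := by
    rw [div_le_iff₀ hb0]; linarith [hub]
  have h6 : (1 - 1 / b) * (∑' k : ℕ, (L k x).toReal)
      = (∑' k : ℕ, (L k x).toReal) - (∑' k : ℕ, (L k x).toReal) / b := by ring
  rw [h6]
  linarith [h5]
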